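/- For every integer n ≥ 1 and all elements a_1, ..., a_{2n+1}, b_1, b_2 of S_{(4,124)}, the element U = a_1a_2 + a_2a_3 + ... + a_{2n}a_{2n+1} + a_{2n+1}a_1 + b_1b_2 + b_2b_1 + b_1 is never equal to 4. -/
import Mathlib


/-- The four-element ai-semiring `S_{(4,124)}`; `e1, e2, e3, e4` stand for `1, 2, 3, 4`. -/
inductive S124 : Type
  | e1 | e2 | e3 | e4
  deriving DecidableEq

open S124

/-- Addition of `S_{(4,124)}`. -/
def S124.add : S124 → S124 → S124
  | e1, _ => e1
  | _, e1 => e1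
  | e2, e2 => e2
  | e2, e3 => e2
  | e3, e2 => e2
  | e2, e4 => e1
  | e4, e2 => e1
  | e3, e3 => e3
  | e3, e4 => e1
  | e4, e3 => e1
  | e4, e4 => e4

/-- Multiplication of `S_{(4,124)}`. -/
def S124.mul : S124 → S124 → S124
  | e1, _ => e1
  | _, e1 => e1
  | e2, e2 => e1
  | e2, e3 => e2
  | e3, e2 => e2
  | e2, e4 => e1
  | e4, e2 => e1
  | e3, e3 => e3
  | e3, e4 => e4
  | e4, e3 => e4
  | e4, e4 => e2

instance : Add S124 := ⟨S124.add⟩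
instance : Mul S124 := ⟨S124.mul⟩

lemma S124.add_eq_e4 (x y : S124) (h : x + y = e4) : x = e4 ∧ y = e4 := by
  revert h; cases x <;> cases y <;> decide

lemma S124.mul_eq_e4 (x y : S124) (h : x * y = e4) :
    (x = e3 ∧ y = e4) ∨ (x = e4 ∧ y = e3) := by
  revert h; cases x <;> cases y <;> decide

lemma S124.fold_eq_e4 (m : ℕ) (f : ℕ → S124) (t : S124)
    (h : (List.range m).foldr (fun i acc => f i + acc) t = e4) :
    (∀ i < m, f i = e4) ∧ t = e4 := by
  induction m generalizing t with
  | zero => simpa using h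
  | succ m ih =>
    rw [List.range_succ, List.foldr_append] at h
    obtain ⟨h1, h2⟩ := ih _ h
    obtain ⟨h3, h4⟩ := S124.add_eq_e4 _ _ h2
    refine ⟨fun i hi => ?_, h4⟩
    rcases Nat.lt_succ_iff_lt_or_eq.mp hi with hi | rfl
    · exact h1 i hi
    · exact h3

/-- For every `n ≥ 1` and all `a₁, …, a_{2n+1}, b₁, b₂` in `S_{(4,124)}`,
the element `U = a₁a₂ + a₂a₃ + ⋯ + a_{2n}a_{2n+1} + a_{2n+1}a₁ + b₁b₂ + b₂b₁ + b₁`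
is never equal to `4`. -/
theorem S124_un_ne_four (n : ℕ) (hn : 1 ≤ n) (a b : ℕ → S124)
    (U : S124)
    (hU : U = (List.range (2 * n)).foldr (fun i acc => a (i + 1) * a (i + 2) + acc)
      (a (2 * n + 1) * a 1 + (b 1 * b 2 + (b 2 * b 1 + b 1)))) :
    U ≠ S124.e4 := by
  intro hU4
  subst hU
  obtain ⟨hall, htail⟩ := S124.fold_eq_e4 _ _ _ hU4
  obtain ⟨hlast, -⟩ := S124.add_eq_e4 _ _ htail
  -- all odd-indexed entries equal a 1
  have key : ∀ i, i ≤ n → a (2 * i + 1) = a 1 := by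
    intro i
    induction i with
    | zero => simp
    | succ i ih =>
      intro hi
      have h1 : a (2 * i + 1) * a (2 * i + 2) = e4 := by
        have := hall (2 * i) (by omega)
        simpa using this
      have h2 : a (2 * i + 2) * a (2 * i + 3) = e4 := by
        have := hall (2 * i + 1) (by omega)
        simpa [show 2 * i + 1 + 2 = 2 * i + 3 by omega] using this
      have heq : a (2 * (i + 1) + 1) = a (2 * i + 1) := by
        have h23 : 2 * (i + 1) + 1 = 2 * i + 3 := by omega
        rw [h23]
        rcases S124.mul_eq_e4 _ _ h1 with ⟨hx, hy⟩ | ⟨hx, hy⟩ <;>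
          rcases S124.mul_eq_e4 _ _ h2 with ⟨hx', hy'⟩ | ⟨hx', hy'⟩ <;>
          simp_all
      rw [heq, ih (by omega)]
  have hn1 : a (2 * n + 1) = a 1 := key n le_rfl
  rw [hn1] at hlast
  rcases S124.mul_eq_e4 _ _ hlast with ⟨hx, hy⟩ | ⟨hx, hy⟩ <;> simp_all
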